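/- Let p be a prime, u, m, n natural numbers with p ∤ u, m ≥ 2 if p = 2, n ≥ m, and set k = 1 + u·p^m. Let ε = 1 if p = 2 and ε = 0 if p is odd. Then for every non-negative integer i with i ≡ 1 (mod p^{n−m+ε}), one has S(k,i) ≡ i (mod p^n). -/
import Mathlib


/-- `S x i = 1 + x + ⋯ + x^(i-1)`, with `S x 0 = 0`. -/
def S (x i : ℕ) : ℕ := ∑ t ∈ Finset.range i, x ^ t

lemma S_succ (k t : ℕ) : S k (t+1) = S k t + k ^ t := Finset.sum_range_succ _ _

lemma S_add (k a b : ℕ) : S k (a + b) = S k a + k ^ a * S k b := by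
  simp [S, Finset.sum_range_add, pow_add, Finset.mul_sum]

lemma S_mul (k a b : ℕ) : S k (a * b) = S (k ^ b) a * S k b := by
  induction a with
  | zero => simp [S]
  | succ a ih =>
    rw [Nat.succ_mul, S_add, ih, S_succ, add_mul, ← pow_mul, mul_comm b a]

lemma S_modEq {k M : ℕ} (h : k ≡ 1 [MOD M]) (t : ℕ) : S k t ≡ t [MOD M] := by
  induction t with
  | zero => simp [S, Nat.ModEq.refl]
  | succ t ih =>
    rw [S_succ]
    simpa using ih.add (h.pow t)

lemma S_int (k t : ℕ) : (S k t : ℤ) = ∑ s ∈ Finset.range t, (k:ℤ)^s := by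
  simp [S]

lemma S_geom (k t : ℕ) : (S k t : ℤ) * ((k:ℤ) - 1) = (k:ℤ)^t - 1 := by
  rw [S_int]; exact geom_sum_mul _ _

lemma R_lemma (p m ε K : ℕ) (hp : p.Prime) (hm : 0 < m)
    (hε : ε = if p = 2 then 1 else 0)
    (hK : K ≡ 1 [MOD p ^ m]) :
    (p:ℤ) ^ (m + 1 - ε) ∣ (S K p : ℤ) - p := by
  have hdvdK : ((p:ℤ)^m) ∣ (K:ℤ) - 1 := by
    obtain ⟨c, hc⟩ := (Nat.modEq_iff_dvd).mp hK
    exact ⟨-c, by push_cast at hc ⊢; linarith⟩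
  have hid : (S K p : ℤ) - p = (∑ t ∈ Finset.range p, (S K t : ℤ)) * ((K:ℤ) - 1) := by
    rw [Finset.sum_mul,
      Finset.sum_congr rfl (fun t _ => S_geom K t), Finset.sum_sub_distrib, ← S_int]
    simp
  rw [hid]
  by_cases h2 : p = 2
  · have hε1 : ε = 1 := by simp [hε, h2]
    have he : m + 1 - ε = m := by omega
    rw [he]
    exact dvd_mul_of_dvd_right hdvdK _
  · have hε0 : ε = 0 := by simp [hε, h2]
    -- need p ∣ ∑ S K t
    have hK1 : K ≡ 1 [MOD p] := hK.of_dvd (dvd_pow_self p hm.ne')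
    have hsum : (∑ t ∈ Finset.range p, S K t) % p = (∑ t ∈ Finset.range p, t) % p := by
      rw [Finset.sum_nat_mod, Finset.sum_congr rfl (fun t _ => S_modEq hK1 t),
        ← Finset.sum_nat_mod]
    have hps : p ∣ ∑ t ∈ Finset.range p, t := by
      have h2' : p.Coprime 2 := (Nat.coprime_primes hp Nat.prime_two).mpr h2
      refine h2'.dvd_of_dvd_mul_right ?_
      rw [Finset.sum_range_id_mul_two]
      exact Dvd.intro _ rfl
    have hps' : p ∣ ∑ t ∈ Finset.range p, S K t := by
      omega
    have hpsZ : (p:ℤ) ∣ ∑ t ∈ Finset.range p, (S K t : ℤ) := by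
      obtain ⟨c, hc⟩ := hps'
      exact ⟨c, by exact_mod_cast congrArg (Nat.cast : ℕ → ℤ) hc⟩
    have : m + 1 - ε = m + 1 := by omega
    rw [this, pow_succ, mul_comm ((p:ℤ)^m) (p:ℤ)]
    exact mul_dvd_mul hpsZ hdvdK

lemma Q_lemma (p u m ε : ℕ) (hp : p.Prime) (hm : 0 < m) (hεm : ε ≤ m)
    (hε : ε = if p = 2 then 1 else 0) (k : ℕ) (hk : k = 1 + u * p ^ m) :
    ∀ s, (p:ℤ) ^ (s + m - ε) ∣ (S k (p ^ s) : ℤ) - p ^ s := by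
  have hk1 : k ≡ 1 [MOD p ^ m] := by
    refine ((Nat.modEq_iff_dvd' (by omega)).mpr ?_).symm
    subst hk
    exact ⟨u, by simp [mul_comm]⟩
  intro s
  induction s with
  | zero => simp [S]
  | succ s ih =>
    set K := k ^ p ^ s with hKdef
    have hmulS : S k (p ^ (s+1)) = S K p * S k (p ^ s) := by
      rw [show p ^ (s+1) = p * p ^ s from by ring, S_mul]
    have hKm : K ≡ 1 [MOD p ^ m] := by
      simpa using hk1.pow (p ^ s)
    have hK1 : K ≡ 1 [MOD p] := hKm.of_dvd (dvd_pow_self p hm.ne')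
    have hpS : (p:ℤ) ∣ (S K p : ℤ) := by
      have : p ∣ S K p := (Nat.modEq_zero_iff_dvd).mp
        ((S_modEq hK1 p).trans (Nat.modEq_zero_iff_dvd.mpr dvd_rfl))
      exact_mod_cast Int.natCast_dvd_natCast.mpr this
    have hA : (p:ℤ) ^ (s + 1 + m - ε) ∣ (S K p : ℤ) * ((S k (p ^ s) : ℤ) - p ^ s) := by
      have : (p:ℤ) ^ (s + 1 + m - ε) = p * p ^ (s + m - ε) := by
        rw [← pow_succ']
        congr 1
        omega
      rw [this]
      exact mul_dvd_mul hpS ih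
    have hB : (p:ℤ) ^ (s + 1 + m - ε) ∣ (p:ℤ) ^ s * ((S K p : ℤ) - p) := by
      have hR := R_lemma p m ε K hp hm hε hKm
      have : (p:ℤ) ^ (s + 1 + m - ε) = p ^ s * p ^ (m + 1 - ε) := by
        rw [← pow_add]
        congr 1
        omega
      rw [this]
      exact mul_dvd_mul_left _ hR
    have hid : (S k (p ^ (s+1)) : ℤ) - p ^ (s+1) =
        (S K p : ℤ) * ((S k (p ^ s) : ℤ) - p ^ s) + (p:ℤ) ^ s * ((S K p : ℤ) - p) := by
      rw [hmulS]
      push_cast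
      ring
    rw [hid]
    exact dvd_add hA hB


theorem stmt_6 (p u m n : ℕ) (hp : p.Prime) (hu : ¬ p ∣ u) (hm : 0 < m)
    (hp2 : p = 2 → 2 ≤ m) (hnm : m ≤ n) (k : ℕ) (hk : k = 1 + u * p ^ m)
    (ε : ℕ) (hε : ε = if p = 2 then 1 else 0)
    (i : ℕ) (hi : i ≡ 1 [MOD p ^ (n - m + ε)]) :
    S k i ≡ i [MOD p ^ n] := by
  have hεm : ε ≤ m := by
    rcases eq_or_ne p 2 with h2 | h2
    · have := hp2 h2; simp only [hε, if_pos h2]; omega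
    · simp only [hε, if_neg h2]; omega
  set e := n - m + ε with he
  have hQ := Q_lemma p u m ε hp hm hεm hε k hk e
  have hexp : e + m - ε = n := by omega
  rw [hexp] at hQ
  -- hQ : (p:ℤ)^n ∣ (S k (p^e) : ℤ) - p^e
  have hSd : S k (p ^ e) ≡ p ^ e [MOD p ^ n] := by
    rw [Nat.modEq_iff_dvd]
    push_cast
    exact (dvd_sub_comm).mp hQ
  have hkd : k ^ p ^ e ≡ 1 [MOD p ^ n] := by
    rw [Nat.modEq_iff_dvd]
    push_cast
    refine (dvd_sub_comm).mp ?_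
    have hgeo : ((k:ℤ) ^ p ^ e - 1) = (S k (p ^ e) : ℤ) * ((k:ℤ) - 1) := (S_geom _ _).symm
    rw [hgeo]
    have hke : (k:ℤ) - 1 = (u:ℤ) * (p:ℤ) ^ m := by subst hk; push_cast; ring
    rw [hke]
    have hdS : (p:ℤ) ^ (n - m) ∣ (S k (p ^ e) : ℤ) := by
      have h1 : (p:ℤ) ^ (n - m) ∣ (S k (p ^ e) : ℤ) - p ^ e :=
        dvd_trans (pow_dvd_pow _ (by omega)) hQ
      have h2 : (p:ℤ) ^ (n - m) ∣ ((p:ℤ) ^ e) := pow_dvd_pow _ (by omega)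
      have := dvd_add h1 h2
      simpa using this
    have : (p:ℤ) ^ n = (p:ℤ) ^ (n - m) * (p:ℤ) ^ m := by
      rw [← pow_add]; congr 1; omega
    rw [this, show (S k (p ^ e) : ℤ) * ((u:ℤ) * (p:ℤ) ^ m)
        = ((S k (p ^ e) : ℤ) * u) * (p:ℤ) ^ m from by ring]
    exact mul_dvd_mul (hdS.mul_right _) dvd_rfl
  rcases Nat.eq_zero_or_pos i with hi0 | hi1
  · subst hi0; simp [S, Nat.ModEq.refl]
  · have hd : p ^ e ∣ i - 1 := (Nat.modEq_iff_dvd' hi1).mp hi.symm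
    obtain ⟨q, hq⟩ := hd
    have hq' : i - 1 = q * p ^ e := by rw [hq, mul_comm]
    have hi' : i = q * p ^ e + 1 := by omega
    rw [hi', S_add, S_mul]
    have h1 : S (k ^ p ^ e) q ≡ q [MOD p ^ n] := S_modEq hkd q
    have h2 : k ^ (q * p ^ e) ≡ 1 [MOD p ^ n] := by
      rw [mul_comm, pow_mul]
      simpa using hkd.pow q
    have hS1 : S k 1 = 1 := by simp [S]
    rw [hS1, mul_one]
    exact (h1.mul hSd).add h2
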